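/- arXiv:2510.00977 — 3 statements merged into one kernel-verified Lean document; each statement's English description precedes it below -/
import Mathlib

section
/- Let p ∈ (0, 1) and for each ε > 0 let X₁, X₂ be independent Bernoulli(p) random variables with values in {0,1}, μ̂ = (X₁ + X₂)/2, σ̂ = sqrt((1/2)·((X₁ − μ̂)² + (X₂ − μ̂)²)), and Y₁(ε) = (X₁ − μ̂)/(σ̂ + ε). Then for each x ∈ {0, 1}, the limit as ε → 0⁺ of E[Y₁(ε) | X₁ = x] equals x − p. In particular the 2-rollout group normalization yields, in the limit, the unbiased centered advantage x − p. -/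
open MeasureTheory ProbabilityTheory Filter

/-- As `ε → 0⁺`, the conditional expectation of the 2-rollout group-normalized advantage
given `X₁ = x` tends to the unbiased centered advantage `x − p`. -/
theorem stmt_2 {Ω : Type*} [MeasurableSpace Ω] (μ : Measure Ω) [IsProbabilityMeasure μ]
    (p : ℝ) (hp : p ∈ Set.Ioo (0 : ℝ) 1)
    (X₁ X₂ : Ω → ℝ) (hX₁ : Measurable X₁) (hX₂ : Measurable X₂)
    (hindep : IndepFun X₁ X₂ μ)
    (hval₁ : ∀ ω, X₁ ω = 0 ∨ X₁ ω = 1) (hval₂ : ∀ ω, X₂ ω = 0 ∨ X₂ ω = 1)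
    (hp₁ : μ {ω | X₁ ω = 1} = ENNReal.ofReal p)
    (hp₂ : μ {ω | X₂ ω = 1} = ENNReal.ofReal p)
    (Y₁ : ℝ → Ω → ℝ)
    (hY₁ : ∀ ε ω, Y₁ ε ω = (X₁ ω - (X₁ ω + X₂ ω) / 2) /
      (Real.sqrt ((1 / 2) * ((X₁ ω - (X₁ ω + X₂ ω) / 2) ^ 2
        + (X₂ ω - (X₁ ω + X₂ ω) / 2) ^ 2)) + ε)) :
    ∀ x ∈ ({0, 1} : Set ℝ),
      Tendsto (fun ε => (∫ ω in {ω | X₁ ω = x}, Y₁ ε ω ∂μ) / (μ {ω | X₁ ω = x}).toReal)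
        (nhdsWithin 0 (Set.Ioi 0)) (nhds (x - p)) := by
  obtain ⟨hp0, hp1⟩ := hp
  -- measurable sets
  have hS1 : MeasurableSet {ω | X₁ ω = 1} := hX₁ (measurableSet_singleton 1)
  have hS0 : MeasurableSet {ω | X₁ ω = 0} := hX₁ (measurableSet_singleton 0)
  have hT1 : MeasurableSet {ω | X₂ ω = 1} := hX₂ (measurableSet_singleton 1)
  have hT0 : MeasurableSet {ω | X₂ ω = 0} := hX₂ (measurableSet_singleton 0)
  -- complement descriptions
  have h1set : {ω | X₁ ω = 0} = {ω | X₁ ω = 1}ᶜ := by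
    ext ω; rcases hval₁ ω with h | h <;> simp [h]
  have h2set : {ω | X₂ ω = 0} = {ω | X₂ ω = 1}ᶜ := by
    ext ω; rcases hval₂ ω with h | h <;> simp [h]
  have hofsub : (1 : ENNReal) - ENNReal.ofReal p = ENNReal.ofReal (1 - p) := by
    rw [← ENNReal.ofReal_one, ← ENNReal.ofReal_sub _ hp0.le]
  have hmu10 : μ {ω | X₁ ω = 0} = ENNReal.ofReal (1 - p) := by
    rw [h1set, prob_compl_eq_one_sub hS1, hp₁, hofsub]
  have hmu20 : μ {ω | X₂ ω = 0} = ENNReal.ofReal (1 - p) := by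
    rw [h2set, prob_compl_eq_one_sub hT1, hp₂, hofsub]
  -- independence products
  have hind10 : μ ({ω | X₁ ω = 1} ∩ {ω | X₂ ω = 0})
      = ENNReal.ofReal p * ENNReal.ofReal (1 - p) := by
    have := hindep.measure_inter_preimage_eq_mul ({1} : Set ℝ) ({0} : Set ℝ)
      (measurableSet_singleton 1) (measurableSet_singleton 0)
    rw [show X₁ ⁻¹' {1} = {ω | X₁ ω = 1} from rfl,
      show X₂ ⁻¹' {0} = {ω | X₂ ω = 0} from rfl] at this
    rw [this, hp₁, hmu20]
  have hind01 : μ ({ω | X₁ ω = 0} ∩ {ω | X₂ ω = 1})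
      = ENNReal.ofReal (1 - p) * ENNReal.ofReal p := by
    have := hindep.measure_inter_preimage_eq_mul ({0} : Set ℝ) ({1} : Set ℝ)
      (measurableSet_singleton 0) (measurableSet_singleton 1)
    rw [show X₁ ⁻¹' {0} = {ω | X₁ ω = 0} from rfl,
      show X₂ ⁻¹' {1} = {ω | X₂ ω = 1} from rfl] at this
    rw [this, hmu10, hp₂]
  -- the basic kernel limit
  have hk : Tendsto (fun ε : ℝ => (1 / 2 : ℝ) / (1 / 2 + ε))
      (nhdsWithin 0 (Set.Ioi 0)) (nhds 1) := by
    have hc : ContinuousAt (fun ε : ℝ => (1 / 2 : ℝ) / (1 / 2 + ε)) 0 :=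
      ContinuousAt.div continuousAt_const (continuousAt_const.add continuousAt_id)
        (by norm_num)
    have := hc.tendsto.mono_left (nhdsWithin_le_nhds (s := Set.Ioi (0:ℝ)))
    simpa using this
  rintro x (rfl | rfl)
  · -- x = 0
    have hint : ∀ ε ∈ Set.Ioi (0 : ℝ),
        (∫ ω in {ω | X₁ ω = 0}, Y₁ ε ω ∂μ)
          = (-((1 / 2 : ℝ) / (1 / 2 + ε))) * (μ ({ω | X₁ ω = 0} ∩ {ω | X₂ ω = 1})).toReal := by
      intro ε hε
      have hε' : (0 : ℝ) < ε := hε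
      have hcong : Set.EqOn (Y₁ ε)
          ({ω | X₂ ω = 1}.indicator (fun _ => -((1 / 2 : ℝ) / (1 / 2 + ε))))
          {ω | X₁ ω = 0} := by
        intro ω hω
        have h1 : X₁ ω = 0 := hω
        rcases hval₂ ω with h2 | h2
        · have : ω ∉ {ω | X₂ ω = 1} := by simp [h2]
          rw [Set.indicator_of_notMem this, hY₁, h1, h2]
          norm_num
        · have hmem : ω ∈ {ω | X₂ ω = 1} := h2
          rw [Set.indicator_of_mem hmem, hY₁, h1, h2]
          rw [show (1 / 2 : ℝ) * ((0 - (0 + 1) / 2) ^ 2 + (1 - (0 + 1) / 2) ^ 2)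
              = (1 / 2 : ℝ) ^ 2 by norm_num, Real.sqrt_sq (by norm_num)]
          ring
      rw [setIntegral_congr_fun hS0 hcong, setIntegral_indicator hT1, setIntegral_const,
        smul_eq_mul]
      simp only [Measure.real]
      ring
    have heq : ∀ᶠ ε in nhdsWithin (0 : ℝ) (Set.Ioi 0),
        (-((1 / 2 : ℝ) / (1 / 2 + ε))) * ((1 - p) * p) / (1 - p)
          = ((∫ ω in {ω | X₁ ω = 0}, Y₁ ε ω ∂μ) / (μ {ω | X₁ ω = 0}).toReal) := by
      filter_upwards [self_mem_nhdsWithin] with ε hε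
      rw [eq_comm, hint ε hε, hind01, hmu10, ENNReal.toReal_mul, ENNReal.toReal_ofReal hp0.le,
        ENNReal.toReal_ofReal (by linarith)]
    refine Tendsto.congr' heq ?_
    have := ((hk.neg.mul_const ((1 - p) * p)).div_const (1 - p))
    convert this using 2
    field_simp [show (1:ℝ) - p ≠ 0 by linarith]
    ring
  · -- x = 1
    have hint : ∀ ε ∈ Set.Ioi (0 : ℝ),
        (∫ ω in {ω | X₁ ω = 1}, Y₁ ε ω ∂μ)
          = ((1 / 2 : ℝ) / (1 / 2 + ε)) * (μ ({ω | X₁ ω = 1} ∩ {ω | X₂ ω = 0})).toReal := by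
      intro ε hε
      have hcong : Set.EqOn (Y₁ ε)
          ({ω | X₂ ω = 0}.indicator (fun _ => ((1 / 2 : ℝ) / (1 / 2 + ε))))
          {ω | X₁ ω = 1} := by
        intro ω hω
        have h1 : X₁ ω = 1 := hω
        rcases hval₂ ω with h2 | h2
        · have hmem : ω ∈ {ω | X₂ ω = 0} := h2
          rw [Set.indicator_of_mem hmem, hY₁, h1, h2]
          rw [show (1 / 2 : ℝ) * ((1 - (1 + 0) / 2) ^ 2 + (0 - (1 + 0) / 2) ^ 2)
              = (1 / 2 : ℝ) ^ 2 by norm_num, Real.sqrt_sq (by norm_num)]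
          norm_num
        · have : ω ∉ {ω | X₂ ω = 0} := by simp [h2]
          rw [Set.indicator_of_notMem this, hY₁, h1, h2]
          norm_num
      rw [setIntegral_congr_fun hS1 hcong, setIntegral_indicator hT0, setIntegral_const,
        smul_eq_mul]
      simp only [Measure.real]
      ring
    have heq : ∀ᶠ ε in nhdsWithin (0 : ℝ) (Set.Ioi 0),
        ((1 / 2 : ℝ) / (1 / 2 + ε)) * (p * (1 - p)) / p
          = ((∫ ω in {ω | X₁ ω = 1}, Y₁ ε ω ∂μ) / (μ {ω | X₁ ω = 1}).toReal) := by
      filter_upwards [self_mem_nhdsWithin] with ε hε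
      rw [eq_comm, hint ε hε, hind10, hp₁, ENNReal.toReal_mul, ENNReal.toReal_ofReal hp0.le,
        ENNReal.toReal_ofReal (by linarith)]
    refine Tendsto.congr' heq ?_
    have := ((hk.mul_const (p * (1 - p))).div_const p)
    convert this using 2
    field_simp [hp0.ne']
end

section
/- Let p ∈ (0, 1), ε > 0, and let (X_k)_{k ≥ 1} be an i.i.d. sequence of Bernoulli(p) random variables with values in {0, 1}. For each N ≥ 1 define μ̂_N = (1/(2N))·Σ_{k=1}^{2N} X_k, σ̂_N = sqrt((1/(2N))·Σ_{k=1}^{2N} (X_k − μ̂_N)²), and Y_N = (X₁ − μ̂_N)/(σ̂_N + ε). Then for each x ∈ {0, 1}, lim_{N→∞} E[Y_N | X₁ = x] = (x − p)/(sqrt(p·(1 − p)) + ε), where the conditional expectation given an event A with P(A) > 0 is E[Y_N·1_A]/P(A). -/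
open MeasureTheory ProbabilityTheory Filter
open Topology

/-- The distribution of a {0,1}-valued random variable with `μ {f = 1} = ofReal p`. -/
lemma bernoulli_map_eq {Ω : Type*} [MeasurableSpace Ω] (μ : Measure Ω) [IsProbabilityMeasure μ]
    (p : ℝ) (hp1 : p ≤ 1) (f : Ω → ℝ) (hf : Measurable f)
    (hval : ∀ ω, f ω = 0 ∨ f ω = 1) (hb : μ {ω | f ω = 1} = ENNReal.ofReal p) :
    Measure.map f μ =
      ENNReal.ofReal p • Measure.dirac 1 + (1 - ENNReal.ofReal p) • Measure.dirac 0 := by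
  have hmeas1 : MeasurableSet {ω | f ω = 1} := hf (measurableSet_singleton 1)
  ext s hs
  rw [Measure.map_apply hf hs]
  rw [Measure.add_apply, Measure.smul_apply, Measure.smul_apply,
    Measure.dirac_apply' _ hs, Measure.dirac_apply' _ hs]
  by_cases h1 : (1 : ℝ) ∈ s <;> by_cases h0 : (0 : ℝ) ∈ s
  · have : f ⁻¹' s = Set.univ := by
      ext ω; simp only [Set.mem_preimage, Set.mem_univ, iff_true]
      rcases hval ω with h | h <;> rw [h] <;> assumption
    rw [this]
    simp only [Set.indicator_of_mem h1, Set.indicator_of_mem h0, Pi.one_apply,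
      smul_eq_mul, mul_one, measure_univ]
    rw [add_tsub_cancel_of_le (by simpa using ENNReal.ofReal_le_one.2 hp1)]
  · have : f ⁻¹' s = {ω | f ω = 1} := by
      ext ω; simp only [Set.mem_preimage, Set.mem_setOf_eq]
      rcases hval ω with h | h <;> rw [h]
      · exact iff_of_false h0 (by norm_num)
      · exact iff_of_true h1 rfl
    rw [this, hb]
    simp [Set.indicator_of_mem h1, Set.indicator_of_notMem h0]
  · have : f ⁻¹' s = {ω | f ω = 1}ᶜ := by
      ext ω; simp only [Set.mem_preimage, Set.mem_compl_iff, Set.mem_setOf_eq]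
      rcases hval ω with h | h <;> rw [h]
      · exact iff_of_true h0 (by norm_num)
      · exact iff_of_false h1 (by simp)
    rw [this, measure_compl hmeas1 (measure_ne_top μ _), hb, measure_univ]
    simp [Set.indicator_of_mem h0, Set.indicator_of_notMem h1]
  · have : f ⁻¹' s = ∅ := by
      ext ω; simp only [Set.mem_preimage, Set.mem_empty_iff_false, iff_false]
      rcases hval ω with h | h <;> rw [h] <;> assumption
    rw [this]
    simp [Set.indicator_of_notMem h1, Set.indicator_of_notMem h0]

/-- Convergence of the conditional expectation of the group-normalized advantage:
for `x ∈ {0,1}`, `E[Y_N | X₁ = x] → (x − p)/(sqrt(p(1−p)) + ε)` as `N → ∞`. -/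
theorem stmt_5 {Ω : Type*} [MeasurableSpace Ω] (μ : Measure Ω) [IsProbabilityMeasure μ]
    (p ε : ℝ) (hp : p ∈ Set.Ioo (0 : ℝ) 1) (hε : 0 < ε)
    (X : ℕ → Ω → ℝ) (hXmeas : ∀ k, Measurable (X k))
    (hindep : iIndepFun X μ)
    (hval : ∀ k ω, X k ω = 0 ∨ X k ω = 1)
    (hbern : ∀ k, μ {ω | X k ω = 1} = ENNReal.ofReal p)
    (μhat : ℕ → Ω → ℝ)
    (hμhat : ∀ N ω, μhat N ω = (1 / (2 * N : ℝ)) * ∑ k ∈ Finset.range (2 * N), X k ω)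
    (σhat : ℕ → Ω → ℝ)
    (hσhat : ∀ N ω, σhat N ω =
      Real.sqrt ((1 / (2 * N : ℝ)) * ∑ k ∈ Finset.range (2 * N), (X k ω - μhat N ω) ^ 2))
    (Y : ℕ → Ω → ℝ)
    (hY : ∀ N ω, Y N ω = (X 0 ω - μhat N ω) / (σhat N ω + ε)) :
    ∀ x ∈ ({0, 1} : Set ℝ),
      Tendsto (fun N => (∫ ω in {ω | X 0 ω = x}, Y N ω ∂μ) / (μ {ω | X 0 ω = x}).toReal)
        atTop (nhds ((x - p) / (Real.sqrt (p * (1 - p)) + ε))) := by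
  obtain ⟨hp0, hp1⟩ := hp
  -- identical distributions
  have hident : ∀ i, IdentDistrib (X i) (X 0) μ μ := by
    intro i
    refine ⟨(hXmeas i).aemeasurable, (hXmeas 0).aemeasurable, ?_⟩
    rw [bernoulli_map_eq μ p hp1.le (X i) (hXmeas i) (hval i) (hbern i),
      bernoulli_map_eq μ p hp1.le (X 0) (hXmeas 0) (hval 0) (hbern 0)]
  -- X 0 as an indicator
  have hmeas1 : MeasurableSet {ω | X 0 ω = 1} := hXmeas 0 (measurableSet_singleton 1)
  have hind : X 0 = Set.indicator {ω | X 0 ω = 1} (fun _ => (1 : ℝ)) := by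
    funext ω
    rcases hval 0 ω with h | h
    · rw [h, Set.indicator_of_notMem (by simp [Set.mem_setOf_eq, h])]
    · rw [h, Set.indicator_of_mem (by simpa [Set.mem_setOf_eq] using h)]
  have hint : Integrable (X 0) μ := by
    rw [hind]
    exact (integrable_const (1 : ℝ)).indicator hmeas1
  have hmean : ∫ ω, X 0 ω ∂μ = p := by
    rw [hind]
    rw [integral_indicator_const (1 : ℝ) hmeas1, measureReal_def, hbern 0, smul_eq_mul, mul_one,
      ENNReal.toReal_ofReal hp0.le]
  -- strong law of large numbers
  have hslln : ∀ᵐ ω ∂μ,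
      Tendsto (fun n : ℕ => (∑ i ∈ Finset.range n, X i ω) / n) atTop (𝓝 p) := by
    have := strong_law_ae_real X hint (fun i j hij => hindep.indepFun hij) hident
    filter_upwards [this] with ω hω
    rwa [hmean] at hω
  -- μhat bounds
  have hμ0 : ∀ N ω, 0 ≤ μhat N ω := by
    intro N ω
    rw [hμhat]
    apply mul_nonneg (by positivity)
    apply Finset.sum_nonneg
    intro k _
    rcases hval k ω with h | h <;> rw [h] <;> norm_num
  have hμ1 : ∀ N ω, μhat N ω ≤ 1 := by
    intro N ω
    rw [hμhat, one_div, inv_mul_eq_div]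
    apply div_le_one_of_le₀
    · calc ∑ k ∈ Finset.range (2 * N), X k ω ≤ ∑ k ∈ Finset.range (2 * N), 1 := by
            apply Finset.sum_le_sum
            intro k _
            rcases hval k ω with h | h <;> rw [h] <;> norm_num
        _ = (2 * N : ℝ) := by simp
    · positivity
  -- σhat formula for N ≥ 1
  have hσform : ∀ N, 1 ≤ N → ∀ ω, σhat N ω = Real.sqrt (μhat N ω * (1 - μhat N ω)) := by
    intro N hN ω
    have hn : (0 : ℝ) < (2 * N : ℝ) := by
      have : (1 : ℝ) ≤ (N : ℝ) := by exact_mod_cast hN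
      linarith
    rw [hσhat]
    congr 1
    set m := μhat N ω with hm
    set s := ∑ k ∈ Finset.range (2 * N), X k ω with hs
    have hsum : ∑ k ∈ Finset.range (2 * N), (X k ω - m) ^ 2
        = s - 2 * m * s + (2 * N : ℝ) * m ^ 2 := by
      have h1 : ∀ k ∈ Finset.range (2 * N), (X k ω - m) ^ 2
          = X k ω - 2 * m * X k ω + m ^ 2 := by
        intro k _
        rcases hval k ω with h | h <;> rw [h] <;> ring
      rw [Finset.sum_congr rfl h1, Finset.sum_add_distrib, Finset.sum_sub_distrib,
        ← Finset.mul_sum, Finset.sum_const, Finset.card_range, nsmul_eq_mul]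
      push_cast
      ring
    have hms : s = (2 * N : ℝ) * m := by
      rw [hm, hμhat]
      field_simp
      exact hs
    rw [hsum, hms]
    field_simp
    ring
  -- a.e. limits
  have hμlim : ∀ᵐ ω ∂μ, Tendsto (fun N => μhat N ω) atTop (𝓝 p) := by
    filter_upwards [hslln] with ω hω
    have h2 : Tendsto (fun N : ℕ => 2 * N) atTop atTop :=
      tendsto_atTop_atTop.2 fun b => ⟨b, fun a ha => by omega⟩
    have := hω.comp h2
    apply this.congr
    intro N
    simp only [Function.comp_apply, hμhat]
    push_cast
    ring
  have hYlim : ∀ᵐ ω ∂μ, Tendsto (fun N => Y N ω) atTop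
      (𝓝 ((X 0 ω - p) / (Real.sqrt (p * (1 - p)) + ε))) := by
    filter_upwards [hμlim] with ω hω
    have hσlim : Tendsto (fun N => σhat N ω) atTop (𝓝 (Real.sqrt (p * (1 - p)))) := by
      have h1 : Tendsto (fun N => Real.sqrt (μhat N ω * (1 - μhat N ω))) atTop
          (𝓝 (Real.sqrt (p * (1 - p)))) :=
        (Real.continuous_sqrt.tendsto _).comp (hω.mul (tendsto_const_nhds.sub hω))
      apply h1.congr'
      filter_upwards [eventually_ge_atTop 1] with N hN
      exact (hσform N hN ω).symm
    have hden : Real.sqrt (p * (1 - p)) + ε ≠ 0 := by positivity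
    have : Tendsto (fun N => (X 0 ω - μhat N ω) / (σhat N ω + ε)) atTop
        (𝓝 ((X 0 ω - p) / (Real.sqrt (p * (1 - p)) + ε))) :=
      (tendsto_const_nhds.sub hω).div (hσlim.add tendsto_const_nhds) hden
    apply this.congr
    intro N
    rw [hY]
  -- uniform bound
  have hbound : ∀ N ω, ‖Y N ω‖ ≤ 1 / ε := by
    intro N ω
    rw [hY, Real.norm_eq_abs, abs_div]
    have hσnn : 0 ≤ σhat N ω := by rw [hσhat]; exact Real.sqrt_nonneg _
    have hden : ε ≤ |σhat N ω + ε| := by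
      rw [abs_of_pos (by linarith)]; linarith
    have hnum : |X 0 ω - μhat N ω| ≤ 1 := by
      have h0 := hμ0 N ω
      have h1 := hμ1 N ω
      rw [abs_sub_le_iff]
      rcases hval 0 ω with h | h <;> rw [h] <;> constructor <;> linarith
    exact div_le_div₀ (by norm_num) hnum hε hden
  -- measurability of Y N
  have hYmeas : ∀ N, Measurable (Y N) := by
    intro N
    have hμm : Measurable (μhat N) := by
      rw [funext (hμhat N)]
      exact measurable_const.mul (Finset.measurable_sum _ fun k _ => hXmeas k)
    have hσm : Measurable (σhat N) := by
      rw [funext (hσhat N)]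
      exact Real.continuous_sqrt.measurable.comp
        (measurable_const.mul
          (Finset.measurable_sum _ fun k _ => ((hXmeas k).sub hμm).pow_const 2))
    rw [funext (hY N)]
    exact ((hXmeas 0).sub hμm).div (hσm.add measurable_const)
  -- main argument
  intro x hx
  set A := {ω | X 0 ω = x} with hA
  have hAmeas : MeasurableSet A := hXmeas 0 (measurableSet_singleton x)
  -- measure of A
  have hAtoReal : 0 < (μ A).toReal := by
    rcases hx with hx | hx
    · -- x = 0
      subst hx
      have hAc : A = {ω | X 0 ω = 1}ᶜ := by
        ext ω
        simp only [hA, Set.mem_setOf_eq, Set.mem_compl_iff]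
        constructor
        · intro h h1; rw [h] at h1; norm_num at h1
        · intro h; rcases hval 0 ω with h' | h'; exact h'; exact absurd h' h
      rw [hAc, measure_compl hmeas1 (measure_ne_top μ _), measure_univ, hbern 0]
      rw [← ENNReal.ofReal_one, ← ENNReal.ofReal_sub _ hp0.le,
        ENNReal.toReal_ofReal (by linarith)]
      linarith
    · -- x = 1
      simp only [Set.mem_singleton_iff] at hx
      subst hx
      rw [hA, hbern 0, ENNReal.toReal_ofReal hp0.le]
      exact hp0
  -- dominated convergence on the restricted measure
  have hDCT : Tendsto (fun N => ∫ ω in A, Y N ω ∂μ) atTop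
      (𝓝 (∫ ω in A, (X 0 ω - p) / (Real.sqrt (p * (1 - p)) + ε) ∂μ)) := by
    apply tendsto_integral_of_dominated_convergence (fun _ => 1 / ε)
    · exact fun N => ((hYmeas N).aestronglyMeasurable).restrict
    · exact integrable_const _
    · exact fun N => Filter.Eventually.of_forall fun ω => hbound N ω
    · exact ae_restrict_of_ae hYlim
  have hconst : (∫ ω in A, (X 0 ω - p) / (Real.sqrt (p * (1 - p)) + ε) ∂μ)
      = (μ A).toReal * ((x - p) / (Real.sqrt (p * (1 - p)) + ε)) := by
    rw [setIntegral_congr_fun hAmeas (g := fun _ => (x - p) / (Real.sqrt (p * (1 - p)) + ε))]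
    · rw [setIntegral_const, smul_eq_mul, measureReal_def]
    · intro ω hω
      simp only [hA, Set.mem_setOf_eq] at hω
      simp only [hω]
  rw [hconst] at hDCT
  have := hDCT.div_const (μ A).toReal
  rwa [mul_div_cancel_left₀ _ (ne_of_gt hAtoReal)] at this
end

section
/- Let p ∈ (0, 1) and let (X_k)_{k ≥ 1} be an i.i.d. sequence of Bernoulli(p) random variables with values in {0, 1}. For each ε > 0 and N ≥ 1 define μ̂_N = (1/(2N))·Σ_{k=1}^{2N} X_k, σ̂_N = sqrt((1/(2N))·Σ_{k=1}^{2N} (X_k − μ̂_N)²), and Y_N(ε) = (X₁ − μ̂_N)/(σ̂_N + ε). Then for each x ∈ {0, 1}, lim_{ε→0⁺} lim_{N→∞} E[Y_N(ε) | X₁ = x] = (x − p)/sqrt(p·(1 − p)), where the conditional expectation given an event A with P(A) > 0 is E[Y_N·1_A]/P(A). -/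
open MeasureTheory ProbabilityTheory Filter Topology

/-- The iterated limit `lim_{ε→0⁺} lim_{N→∞} E[Y_N(ε) | X₁ = x] = (x − p)/sqrt(p(1−p))`
for the group-normalized advantage of i.i.d. Bernoulli(p) rewards. -/
theorem stmt_6 {Ω : Type*} [MeasurableSpace Ω] (μ : Measure Ω) [IsProbabilityMeasure μ]
    (p : ℝ) (hp : p ∈ Set.Ioo (0 : ℝ) 1)
    (X : ℕ → Ω → ℝ) (hXmeas : ∀ k, Measurable (X k))
    (hindep : iIndepFun X μ)
    (hval : ∀ k ω, X k ω = 0 ∨ X k ω = 1)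
    (hbern : ∀ k, μ {ω | X k ω = 1} = ENNReal.ofReal p)
    (μhat : ℕ → Ω → ℝ)
    (hμhat : ∀ N ω, μhat N ω = (1 / (2 * N : ℝ)) * ∑ k ∈ Finset.range (2 * N), X k ω)
    (σhat : ℕ → Ω → ℝ)
    (hσhat : ∀ N ω, σhat N ω =
      Real.sqrt ((1 / (2 * N : ℝ)) * ∑ k ∈ Finset.range (2 * N), (X k ω - μhat N ω) ^ 2))
    (Y : ℝ → ℕ → Ω → ℝ)
    (hY : ∀ ε N ω, Y ε N ω = (X 0 ω - μhat N ω) / (σhat N ω + ε)) :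
    ∀ x ∈ ({0, 1} : Set ℝ), ∀ L : ℝ → ℝ,
      (∀ ε > (0 : ℝ),
        Tendsto (fun N => (∫ ω in {ω | X 0 ω = x}, Y ε N ω ∂μ) / (μ {ω | X 0 ω = x}).toReal)
          atTop (nhds (L ε))) →
      Tendsto L (nhdsWithin 0 (Set.Ioi 0)) (nhds ((x - p) / Real.sqrt (p * (1 - p)))) := by
  obtain ⟨hp0, hp1⟩ := hp
  set s := Real.sqrt (p * (1 - p)) with hs_def
  have hs : 0 < s := Real.sqrt_pos.2 (mul_pos hp0 (by linarith))
  have hX01 : ∀ k ω, 0 ≤ X k ω ∧ X k ω ≤ 1 := by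
    intro k ω; rcases hval k ω with h | h <;> rw [h] <;> norm_num
  have hAmeas : ∀ (x : ℝ) (k : ℕ), MeasurableSet {ω | X k ω = x} := fun x k =>
    (hXmeas k) (measurableSet_singleton x)
  -- measure of the zero set
  have h0meas : ∀ k, μ {ω | X k ω = 0} = 1 - ENNReal.ofReal p := by
    intro k
    have hdisj : Disjoint {ω | X k ω = 0} {ω | X k ω = 1} := by
      rw [Set.disjoint_left]
      rintro ω h0 h1
      simp only [Set.mem_setOf_eq] at h0 h1
      rw [h0] at h1; norm_num at h1
    have hunion : {ω | X k ω = 0} ∪ {ω | X k ω = 1} = Set.univ := by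
      ext ω; simpa using hval k ω
    have hadd : μ {ω | X k ω = 0} + μ {ω | X k ω = 1} = 1 := by
      rw [← measure_union hdisj (hAmeas 1 k), hunion, measure_univ]
    rw [hbern k] at hadd
    rw [← hadd]
    rw [ENNReal.add_sub_cancel_right (by simp)]
  -- bounds on μhat
  have hμ01 : ∀ N ω, 0 ≤ μhat N ω ∧ μhat N ω ≤ 1 := by
    intro N ω
    rw [hμhat]
    rcases Nat.eq_zero_or_pos N with h | h
    · subst h; simp
    · have hn : (0 : ℝ) < 2 * N := by positivity
      have hsum0 : 0 ≤ ∑ k ∈ Finset.range (2 * N), X k ω :=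
        Finset.sum_nonneg fun k _ => (hX01 k ω).1
      have hsum1 : ∑ k ∈ Finset.range (2 * N), X k ω ≤ 2 * N := by
        calc ∑ k ∈ Finset.range (2 * N), X k ω ≤ ∑ _k ∈ Finset.range (2 * N), (1 : ℝ) :=
              Finset.sum_le_sum fun k _ => (hX01 k ω).2
          _ = 2 * N := by simp
      constructor
      · positivity
      · rw [div_mul_eq_mul_div, one_mul, div_le_one hn]; exact hsum1
  -- integrability of X 0
  have hint : Integrable (X 0) μ := by
    refine (integrable_const (1 : ℝ)).mono' (hXmeas 0).aestronglyMeasurable ?_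
    filter_upwards with ω
    rw [Real.norm_eq_abs, abs_le]
    exact ⟨by linarith [(hX01 0 ω).1], (hX01 0 ω).2⟩
  -- expectation of X 0
  have hEX : ∫ ω, X 0 ω ∂μ = p := by
    have hXind : X 0 = Set.indicator {ω | X 0 ω = 1} (fun _ => (1 : ℝ)) := by
      funext ω
      rcases hval 0 ω with h | h
      · rw [Set.indicator_of_notMem (by simp [h]), h]
      · rw [Set.indicator_of_mem (by simp [h]), h]
    rw [hXind, integral_indicator_const _ (hAmeas 1 0), measureReal_def, hbern 0,
      ENNReal.toReal_ofReal hp0.le, smul_eq_mul, mul_one]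
  -- identical distribution
  have hmap : ∀ k, Measure.map (X k) μ =
      (ENNReal.ofReal p) • Measure.dirac (1 : ℝ) + (1 - ENNReal.ofReal p) • Measure.dirac 0 := by
    intro k
    classical
    ext t ht
    rw [Measure.map_apply (hXmeas k) ht]
    have hpre : X k ⁻¹' t =
        (if (1 : ℝ) ∈ t then {ω | X k ω = 1} else ∅) ∪
          (if (0 : ℝ) ∈ t then {ω | X k ω = 0} else ∅) := by
      ext ω
      rcases hval k ω with h | h <;> by_cases h1 : (1 : ℝ) ∈ t <;> by_cases h0 : (0 : ℝ) ∈ t <;>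
        simp [Set.mem_preimage, h, h1, h0]
    have hdisj : Disjoint {ω | X k ω = 1} {ω | X k ω = 0} := by
      rw [Set.disjoint_left]
      rintro ω h1 h0
      simp only [Set.mem_setOf_eq] at h0 h1
      rw [h0] at h1; norm_num at h1
    simp only [Measure.add_apply, Measure.smul_apply, Measure.dirac_apply' _ ht, smul_eq_mul]
    by_cases h1 : (1 : ℝ) ∈ t <;> by_cases h0 : (0 : ℝ) ∈ t
    · rw [hpre]
      simp only [h1, h0, if_true]
      rw [measure_union hdisj (hAmeas 0 k), hbern k, h0meas k,
        Set.indicator_of_mem h1, Set.indicator_of_mem h0]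
      simp
    · rw [hpre]
      simp only [h1, h0, if_true, if_false, Set.union_empty]
      rw [hbern k, Set.indicator_of_mem h1, Set.indicator_of_notMem h0]
      simp
    · rw [hpre]
      simp only [h1, h0, if_true, if_false, Set.empty_union]
      rw [h0meas k, Set.indicator_of_notMem h1, Set.indicator_of_mem h0]
      simp
    · rw [hpre]
      simp only [h1, h0, if_false, Set.union_empty]
      rw [Set.indicator_of_notMem h1, Set.indicator_of_notMem h0]
      simp
  have hident : ∀ i, IdentDistrib (X i) (X 0) μ μ := fun i =>
    ⟨(hXmeas i).aemeasurable, (hXmeas 0).aemeasurable, by rw [hmap i, hmap 0]⟩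
  have hpair : Pairwise (Function.onFun (fun f g => IndepFun f g μ) X) := fun i j hij => hindep.indepFun hij
  -- strong law for μhat
  have h2N : Tendsto (fun N : ℕ => 2 * N) atTop atTop :=
    tendsto_atTop_mono (fun N => Nat.le_mul_of_pos_left N two_pos) tendsto_id
  have hae : ∀ᵐ ω ∂μ, Tendsto (fun N => μhat N ω) atTop (𝓝 p) := by
    filter_upwards [strong_law_ae X hint hpair hident] with ω hω
    rw [hEX] at hω
    have := hω.comp h2N
    refine this.congr fun N => ?_
    simp only [Function.comp_apply, smul_eq_mul]
    rw [hμhat]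
    push_cast
    ring
  -- algebraic identity for σhat
  have hσ_eq : ∀ N : ℕ, 1 ≤ N → ∀ ω, σhat N ω = Real.sqrt (μhat N ω - μhat N ω ^ 2) := by
    intro N hN ω
    rw [hσhat]
    congr 1
    have hn : (2 * N : ℝ) ≠ 0 := by
      have : (1 : ℝ) ≤ (N : ℝ) := by exact_mod_cast hN
      positivity
    have hsq : ∀ k, (X k ω) ^ 2 = X k ω := by
      intro k; rcases hval k ω with h | h <;> rw [h] <;> ring
    have hsum : ∑ k ∈ Finset.range (2 * N), X k ω = (2 * N : ℝ) * μhat N ω := by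
      rw [hμhat]; field_simp
    have expand : ∑ k ∈ Finset.range (2 * N), (X k ω - μhat N ω) ^ 2 =
        (∑ k ∈ Finset.range (2 * N), X k ω) -
          2 * μhat N ω * (∑ k ∈ Finset.range (2 * N), X k ω) +
          (2 * N : ℝ) * μhat N ω ^ 2 := by
      have step : ∀ k ∈ Finset.range (2 * N), (X k ω - μhat N ω) ^ 2 =
          X k ω - 2 * μhat N ω * X k ω + μhat N ω ^ 2 := by
        intro k _
        linear_combination hsq k
      rw [Finset.sum_congr rfl step, Finset.sum_add_distrib, Finset.sum_sub_distrib,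
        ← Finset.mul_sum, Finset.sum_const, Finset.card_range, nsmul_eq_mul]
      push_cast
      ring
    rw [expand, hsum]
    field_simp
    ring
  -- convergence of σhat
  have hσae : ∀ᵐ ω ∂μ, Tendsto (fun N => σhat N ω) atTop (𝓝 s) := by
    filter_upwards [hae] with ω hω
    have h1 : Tendsto (fun N => Real.sqrt (μhat N ω - μhat N ω ^ 2)) atTop
        (𝓝 (Real.sqrt (p - p ^ 2))) :=
      (Real.continuous_sqrt.tendsto _).comp (hω.sub (hω.pow 2))
    have hps : Real.sqrt (p - p ^ 2) = s := by rw [hs_def]; ring_nf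
    rw [hps] at h1
    refine h1.congr' ?_
    filter_upwards [eventually_ge_atTop 1] with N hN
    exact (hσ_eq N hN ω).symm
  -- measurability
  have hμmeas : ∀ N, Measurable (μhat N) := by
    intro N
    have : μhat N = fun ω => (1 / (2 * N : ℝ)) * ∑ k ∈ Finset.range (2 * N), X k ω :=
      funext (hμhat N)
    rw [this]
    exact (Finset.measurable_sum _ fun k _ => hXmeas k).const_mul _
  have hσmeas : ∀ N, Measurable (σhat N) := by
    intro N
    have : σhat N = fun ω =>
        Real.sqrt ((1 / (2 * N : ℝ)) * ∑ k ∈ Finset.range (2 * N), (X k ω - μhat N ω) ^ 2) :=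
      funext (hσhat N)
    rw [this]
    exact Real.continuous_sqrt.measurable.comp
      ((Finset.measurable_sum _ fun k _ => ((hXmeas k).sub (hμmeas N)).pow_const 2).const_mul _)
  have hYmeas : ∀ ε N, Measurable (Y ε N) := by
    intro ε N
    have : Y ε N = fun ω => (X 0 ω - μhat N ω) / (σhat N ω + ε) := funext (hY ε N)
    rw [this]
    exact ((hXmeas 0).sub (hμmeas N)).div ((hσmeas N).add measurable_const)
  have hσnonneg : ∀ N ω, 0 ≤ σhat N ω := fun N ω => by rw [hσhat]; exact Real.sqrt_nonneg _
  -- main argument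
  intro x hx L hL
  set A := {ω | X 0 ω = x} with hA_def
  have hx01 : x = 0 ∨ x = 1 := by simpa using hx
  have hm : 0 < (μ A).toReal := by
    rcases hx01 with hx | hx
    · have : μ A = 1 - ENNReal.ofReal p := by rw [hA_def, hx]; exact h0meas 0
      rw [this, ENNReal.toReal_sub_of_le (by simpa using hp1.le) (by simp)]
      simp only [ENNReal.toReal_one, ENNReal.toReal_ofReal hp0.le]
      linarith
    · have : μ A = ENNReal.ofReal p := by rw [hA_def, hx]; exact hbern 0
      rw [this, ENNReal.toReal_ofReal hp0.le]
      exact hp0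
  have hx01 : x = 0 ∨ x = 1 := by simpa using hx
  -- the inner limit for each ε > 0
  have hmain : ∀ ε > (0 : ℝ),
      Tendsto (fun N => (∫ ω in A, Y ε N ω ∂μ) / (μ A).toReal) atTop
        (𝓝 ((x - p) / (s + ε))) := by
    intro ε hε
    have hsε : (0 : ℝ) < s + ε := by linarith
    have hconv : Tendsto (fun N => ∫ ω in A, Y ε N ω ∂μ) atTop
        (𝓝 ((μ A).toReal * ((x - p) / (s + ε)))) := by
      have hDCT := tendsto_integral_of_dominated_convergence (μ := μ.restrict A)
        (F := fun N ω => Y ε N ω) (f := fun _ => (x - p) / (s + ε)) (bound := fun _ => 1 / ε)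
        (fun N => (hYmeas ε N).aestronglyMeasurable)
        (integrable_const _)
        (fun N => by
          filter_upwards with ω
          rw [hY, Real.norm_eq_abs, abs_div]
          have h1 : |X 0 ω - μhat N ω| ≤ 1 := by
            rw [abs_le]
            constructor
            · linarith [(hX01 0 ω).1, (hμ01 N ω).2]
            · linarith [(hX01 0 ω).2, (hμ01 N ω).1]
          have h2 : ε ≤ |σhat N ω + ε| := by
            rw [abs_of_pos (by linarith [hσnonneg N ω])]
            linarith [hσnonneg N ω]
          exact div_le_div₀ zero_le_one h1 hε h2)
        (by
          have h1 : ∀ᵐ ω ∂μ.restrict A, Tendsto (fun N => μhat N ω) atTop (𝓝 p) :=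
            ae_restrict_of_ae hae
          have h2 : ∀ᵐ ω ∂μ.restrict A, Tendsto (fun N => σhat N ω) atTop (𝓝 s) :=
            ae_restrict_of_ae hσae
          have h3 : ∀ᵐ ω ∂μ.restrict A, X 0 ω = x := ae_restrict_mem (hAmeas x 0)
          filter_upwards [h1, h2, h3] with ω hω1 hω2 hω3
          have : Tendsto (fun N => (X 0 ω - μhat N ω) / (σhat N ω + ε)) atTop
              (𝓝 ((x - p) / (s + ε))) := by
            rw [hω3]
            exact (tendsto_const_nhds.sub hω1).div (hω2.add tendsto_const_nhds) hsε.ne'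
          refine this.congr fun N => ?_
          rw [hY])
      rwa [integral_const, measureReal_def, Measure.restrict_apply_univ, smul_eq_mul] at hDCT
    have h2 := hconv.div_const (μ A).toReal
    have heq : (μ A).toReal * ((x - p) / (s + ε)) / (μ A).toReal = (x - p) / (s + ε) := by
      field_simp
    rwa [heq] at h2
  -- identify L
  have hLval : ∀ ε > (0 : ℝ), L ε = (x - p) / (s + ε) := fun ε hε =>
    tendsto_nhds_unique (hL ε hε) (hmain ε hε)
  have htarget : Tendsto (fun ε : ℝ => (x - p) / (s + ε)) (nhdsWithin 0 (Set.Ioi 0))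
      (𝓝 ((x - p) / s)) := by
    have h1 : Tendsto (fun ε : ℝ => s + ε) (𝓝 0) (𝓝 s) := by
      exact (continuous_add_left s).tendsto' 0 s (by simp)
    exact (tendsto_const_nhds.div h1 hs.ne').mono_left nhdsWithin_le_nhds
  refine htarget.congr' ?_
  filter_upwards [self_mem_nhdsWithin] with ε hε
  exact (hLval ε hε).symm
end
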